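/- Let c ∈ (0, 1), a > 1, and define f : ℝ → ℝ by f(h) = (1 − c)·h + c·tanh(a·h) (zero input), and let h* be the unique solution of tanh(a·h) = h in (0, ∞). Then: if h₀ > 0 the iterates f^[n](h₀) converge to h*; if h₀ < 0 the iterates converge to −h*; and if h₀ = 0 then f^[n](0) = 0 for all n. Hence the sign of the initial state is encoded in persistent memory: trajectories converge to one of two distinct stable equilibria depending on the sign of h₀. -/

import Mathlib

open Filter

private lemma tanh_hasDerivAt (x : ℝ) :
    HasDerivAt Real.tanh (1 / Real.cosh x ^ 2) x := by
  have h := (Real.hasDerivAt_sinh x).div (Real.hasDerivAt_cosh x) (Real.cosh_pos x).ne'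
  have heq : (Real.cosh x * Real.cosh x - Real.sinh x * Real.sinh x) / Real.cosh x ^ 2
      = 1 / Real.cosh x ^ 2 := by
    rw [show Real.cosh x * Real.cosh x - Real.sinh x * Real.sinh x
        = Real.cosh x ^ 2 - Real.sinh x ^ 2 by ring, Real.cosh_sq_sub_sinh_sq]
  rw [heq] at h
  exact h.congr_of_eventuallyEq (Eventually.of_forall fun y =>
    (Real.tanh_eq_sinh_div_cosh y))

private lemma tanh_strictMono : StrictMono Real.tanh := by
  apply strictMono_of_deriv_pos
  intro x
  rw [(tanh_hasDerivAt x).deriv]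
  positivity

private lemma tanh_continuous : Continuous Real.tanh := by
  have : Real.tanh = fun x => Real.sinh x / Real.cosh x := by
    funext x; exact Real.tanh_eq_sinh_div_cosh x
  rw [this]
  exact Real.continuous_sinh.div Real.continuous_cosh fun x => (Real.cosh_pos x).ne'

private lemma tanh_lt_one (x : ℝ) : Real.tanh x < 1 := by
  rw [Real.tanh_eq_sinh_div_cosh, div_lt_one (Real.cosh_pos x)]
  exact Real.sinh_lt_cosh x

theorem bistable_persistent_memory (c a : ℝ) (hc0 : 0 < c) (hc1 : c < 1) (ha : 1 < a)
    (f : ℝ → ℝ) (hf : ∀ h, f h = (1 - c) * h + c * Real.tanh (a * h))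
    (hstar : ℝ) (hpos : 0 < hstar) (hfix : Real.tanh (a * hstar) = hstar)
    (huniq : ∀ h, 0 < h → Real.tanh (a * h) = h → h = hstar) :
    (∀ h0, 0 < h0 → Tendsto (fun n => f^[n] h0) atTop (nhds hstar)) ∧
    (∀ h0, h0 < 0 → Tendsto (fun n => f^[n] h0) atTop (nhds (-hstar))) ∧
    (∀ n, f^[n] 0 = 0) := by
  have ha0 : 0 < a := lt_trans one_pos ha
  set g : ℝ → ℝ := fun h => Real.tanh (a * h) - h with hg
  have hgcont : Continuous g :=
    (tanh_continuous.comp (continuous_const.mul continuous_id)).sub continuous_id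
  have hg0 : g 0 = 0 := by simp [hg, Real.tanh_zero]
  -- derivative of g at 0 is a - 1 > 0
  have hgderiv : HasDerivAt g (a - 1) 0 := by
    have h0 : HasDerivAt (fun h : ℝ => a * h) a 0 := by
      simpa using (hasDerivAt_id (0:ℝ)).const_mul a
    have h1 : HasDerivAt (fun h : ℝ => Real.tanh (a * h))
        ((1 / Real.cosh (a * 0) ^ 2) * a) 0 := (tanh_hasDerivAt (a * 0)).comp 0 h0
    have h1' : (1 / Real.cosh (a * 0) ^ 2) * a = a := by
      norm_num [Real.cosh_zero]
    rw [h1'] at h1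
    exact h1.sub (hasDerivAt_id 0)
  -- g is positive on a right neighborhood of 0
  have hsmall : ∃ ε > 0, ∀ t, 0 < t → t < ε → 0 < g t := by
    have hslope := hasDerivAt_iff_tendsto_slope.mp hgderiv
    have hev : ∀ᶠ t in nhdsWithin 0 {(0:ℝ)}ᶜ, 0 < slope g 0 t :=
      hslope (Ioi_mem_nhds (by linarith : (0:ℝ) < a - 1))
    rw [eventually_iff, Metric.mem_nhdsWithin_iff] at hev
    obtain ⟨ε, hε, hev⟩ := hev
    refine ⟨ε, hε, fun t ht htε => ?_⟩
    have hd : t ∈ Metric.ball (0:ℝ) ε := by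
      rw [Metric.mem_ball, Real.dist_eq, sub_zero, abs_of_pos ht]; exact htε
    have hsl : 0 < slope g 0 t := hev ⟨hd, ne_of_gt ht⟩
    rw [slope_def_field, hg0, sub_zero, sub_zero] at hsl
    have := mul_pos hsl ht
    rwa [div_mul_cancel₀ _ (ne_of_gt ht)] at this
  -- sign of g on (0, hstar)
  have hA : ∀ h, 0 < h → h < hstar → 0 < g h := by
    intro h hh hhs
    by_contra hcon
    push_neg at hcon
    rcases eq_or_lt_of_le hcon with heq | hlt
    · have hz : Real.tanh (a * h) - h = 0 := by simpa [hg] using heq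
      exact absurd (huniq h hh (sub_eq_zero.mp hz)) (ne_of_lt hhs)
    · obtain ⟨ε, hε, hεpos⟩ := hsmall
      set t := min (ε / 2) (h / 2) with ht
      have ht0 : 0 < t := lt_min (by linarith) (by linarith)
      have htε : t < ε := lt_of_le_of_lt (min_le_left _ _) (by linarith)
      have hth : t < h := lt_of_le_of_lt (min_le_right _ _) (by linarith)
      have hgt : 0 < g t := hεpos t ht0 htε
      have : (0:ℝ) ∈ Set.Icc (g h) (g t) := ⟨le_of_lt hlt, le_of_lt hgt⟩
      obtain ⟨r, hr, hgr⟩ := intermediate_value_Icc' (le_of_lt hth)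
        (hgcont.continuousOn) this
      have hr0 : 0 < r := lt_of_lt_of_le ht0 hr.1
      have hz : Real.tanh (a * r) - r = 0 := hgr
      have h1 : r = hstar := huniq r hr0 (sub_eq_zero.mp hz)
      have h2 : r < hstar := lt_of_le_of_lt hr.2 hhs
      exact absurd h1 (ne_of_lt h2)
  -- sign of g on (hstar, ∞)
  have hB : ∀ h, hstar < h → g h < 0 := by
    intro h hhs
    have hh : 0 < h := lt_trans hpos hhs
    by_contra hcon
    push_neg at hcon
    rcases eq_or_lt_of_le hcon with heq | hlt
    · have hz : Real.tanh (a * h) - h = 0 := by simpa [hg] using heq.symm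
      exact absurd (huniq h hh (sub_eq_zero.mp hz)) (ne_of_gt hhs)
    · have hb1 : (1:ℝ) ≤ h + 1 := by linarith
      have hgb : g (h + 1) < 0 := by
        have := tanh_lt_one (a * (h + 1))
        show Real.tanh (a * (h+1)) - (h+1) < 0
        linarith
      have hmem : (0:ℝ) ∈ Set.Icc (g (h+1)) (g h) := ⟨le_of_lt hgb, le_of_lt hlt⟩
      obtain ⟨r, hr, hgr⟩ := intermediate_value_Icc' (by linarith : h ≤ h + 1)
        (hgcont.continuousOn) hmem
      have hr0 : 0 < r := lt_of_lt_of_le hh hr.1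
      have hz : Real.tanh (a * r) - r = 0 := hgr
      have h1 : r = hstar := huniq r hr0 (sub_eq_zero.mp hz)
      have h2 : hstar < r := lt_of_lt_of_le hhs hr.1
      exact absurd h1 (ne_of_gt h2)
  -- basic facts about f
  have hfc : Continuous f := by
    have : f = fun h => (1 - c) * h + c * Real.tanh (a * h) := funext hf
    rw [this]
    exact ((continuous_const.mul continuous_id).add (continuous_const.mul
      (tanh_continuous.comp (continuous_const.mul continuous_id))))
  have htanhpos : ∀ h : ℝ, 0 < h → 0 < Real.tanh (a * h) := by
    intro h hh
    have := tanh_strictMono (show (0:ℝ) < a * h by positivity)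
    simpa [Real.tanh_zero] using this
  have hfpos : ∀ h, 0 < h → 0 < f h := by
    intro h hh
    rw [hf]
    have := htanhpos h hh
    nlinarith
  have hmonotanh : ∀ h, 0 < h → h ≤ hstar → Real.tanh (a * h) ≤ hstar := by
    intro h hh hhs
    calc Real.tanh (a * h) ≤ Real.tanh (a * hstar) :=
          tanh_strictMono.monotone (by nlinarith)
      _ = hstar := hfix
  have hfle : ∀ h, 0 < h → h ≤ hstar → f h ≤ hstar := by
    intro h hh hhs
    rw [hf]
    have := hmonotanh h hh hhs
    nlinarith
  have hfge_h : ∀ h, 0 < h → h ≤ hstar → h ≤ f h := by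
    intro h hh hhs
    rw [hf]
    rcases eq_or_lt_of_le hhs with heq | hlt
    · rw [heq, hfix]; ring_nf; rfl
    · have := hA h hh hlt
      have : h < Real.tanh (a * h) := by
        have h2 : 0 < Real.tanh (a * h) - h := this
        linarith
      nlinarith
  have hfge_star : ∀ h, hstar ≤ h → hstar ≤ f h := by
    intro h hhs
    rw [hf]
    have : hstar ≤ Real.tanh (a * h) := by
      calc hstar = Real.tanh (a * hstar) := hfix.symm
        _ ≤ Real.tanh (a * h) := tanh_strictMono.monotone (by nlinarith)
    nlinarith
  have hfle_h : ∀ h, hstar ≤ h → f h ≤ h := by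
    intro h hhs
    rw [hf]
    rcases eq_or_lt_of_le hhs with heq | hlt
    · rw [← heq, hfix]; ring_nf; rfl
    · have h2 : Real.tanh (a * h) - h < 0 := hB h hlt
      nlinarith
  -- fixed points of f that are positive equal hstar
  have hfixpt : ∀ L, 0 < L → f L = L → L = hstar := by
    intro L hL hfL
    rw [hf] at hfL
    apply huniq L hL
    have : c * (Real.tanh (a * L) - L) = 0 := by linarith
    have := mul_eq_zero.mp this
    rcases this with h | h
    · exact absurd h (ne_of_gt hc0)
    · linarith
  -- main positive case
  have key : ∀ h0, 0 < h0 → Tendsto (fun n => f^[n] h0) atTop (nhds hstar) := by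
    intro h0 hh0
    set u : ℕ → ℝ := fun n => f^[n] h0 with hu
    have husucc : ∀ n, u (n + 1) = f (u n) := fun n =>
      Function.iterate_succ_apply' f n h0
    rcases le_or_gt h0 hstar with hcase | hcase
    · -- monotone increasing, bounded above by hstar
      have hbnd : ∀ n, 0 < u n ∧ u n ≤ hstar := by
        intro n
        induction n with
        | zero => exact ⟨hh0, hcase⟩
        | succ k ih =>
          rw [husucc]
          exact ⟨hfpos _ ih.1, hfle _ ih.1 ih.2⟩
      have hmono : Monotone u := monotone_nat_of_le_succ fun n => by
        rw [husucc]; exact hfge_h _ (hbnd n).1 (hbnd n).2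
      have hbdd : BddAbove (Set.range u) := ⟨hstar, by
        rintro x ⟨n, rfl⟩; exact (hbnd n).2⟩
      have hconv := tendsto_atTop_ciSup hmono hbdd
      set L := ⨆ n, u n with hL
      have h1 : Tendsto (fun n => u (n + 1)) atTop (nhds L) :=
        hconv.comp (tendsto_add_atTop_nat 1)
      have h2 : Tendsto (fun n => f (u n)) atTop (nhds (f L)) :=
        (hfc.tendsto L).comp hconv
      have h3 : (fun n => u (n + 1)) = fun n => f (u n) := funext husucc
      rw [h3] at h1
      have hfL : f L = L := tendsto_nhds_unique h2 h1
      have hL0 : 0 < L := lt_of_lt_of_le hh0 ((le_ciSup hbdd 0))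
      have : L = hstar := hfixpt L hL0 hfL
      rwa [this] at hconv
    · -- antitone decreasing, bounded below by hstar
      have hbnd : ∀ n, hstar ≤ u n := by
        intro n
        induction n with
        | zero => exact le_of_lt hcase
        | succ k ih =>
          rw [husucc]; exact hfge_star _ ih
      have hanti : Antitone u := antitone_nat_of_succ_le fun n => by
        rw [husucc]; exact hfle_h _ (hbnd n)
      have hbdd : BddBelow (Set.range u) := ⟨hstar, by
        rintro x ⟨n, rfl⟩; exact hbnd n⟩
      have hconv := tendsto_atTop_ciInf hanti hbdd
      set L := ⨅ n, u n with hL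
      have h1 : Tendsto (fun n => u (n + 1)) atTop (nhds L) :=
        hconv.comp (tendsto_add_atTop_nat 1)
      have h2 : Tendsto (fun n => f (u n)) atTop (nhds (f L)) :=
        (hfc.tendsto L).comp hconv
      have h3 : (fun n => u (n + 1)) = fun n => f (u n) := funext husucc
      rw [h3] at h1
      have hfL : f L = L := tendsto_nhds_unique h2 h1
      have hL0 : 0 < L := lt_of_lt_of_le hpos (le_ciInf hbnd)
      have : L = hstar := hfixpt L hL0 hfL
      rwa [this] at hconv
  refine ⟨key, ?_, ?_⟩
  · -- negative initial conditions, by oddness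
    have hodd : ∀ x, f (-x) = -f x := by
      intro x
      rw [hf, hf, show a * -x = -(a * x) by ring, Real.tanh_neg]
      ring
    have hit : ∀ n x, f^[n] (-x) = -(f^[n] x) := by
      intro n
      induction n with
      | zero => intro x; simp
      | succ k ih =>
        intro x
        rw [Function.iterate_succ_apply' f k (-x), ih x, hodd,
          Function.iterate_succ_apply' f k x]
    intro h0 hh0
    have hpos0 : 0 < -h0 := by linarith
    have hconv := (key (-h0) hpos0).neg
    have heq : (fun n => f^[n] h0) = fun n => -(f^[n] (-h0)) := by
      funext n
      rw [← hit n (-h0), neg_neg]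
    rw [heq]
    exact hconv
  · -- zero initial condition
    have hf0 : f 0 = 0 := by
      rw [hf]; simp [Real.tanh_zero]
    intro n
    exact Function.iterate_fixed hf0 n
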